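/- arXiv:math-ph/0510088 — 3 statements merged into one kernel-verified Lean document; each statement's English description precedes it below -/
import Mathlib

section
/- Let n ≥ 3. Let so(n) denote the space of real skew-symmetric n×n matrices, let E_1,…,E_n be the standard basis vectors of ℝⁿ, let 𝔇 ⊂ so(n) be the span of the matrices E_i∧E_n := E_iE_nᵀ − E_nE_iᵀ for i = 1,…,n−1, and let so(n−1) ⊂ so(n) denote the subspace of skew-symmetric matrices whose last row and last column are zero. Then for every g in the special orthogonal group SO(n), the subspace sum 𝔇 + g⁻¹·so(n−1)·g equals so(n) if and only if the entry g_{nn} is nonzero. -/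
open Matrix

/-- `u ∧ v := u vᵀ − v uᵀ`. -/
def wedge {n : ℕ} (u v : Fin n → ℝ) : Matrix (Fin n) (Fin n) ℝ :=
  vecMulVec u v - vecMulVec v u

/-- The space `so(n)` of real skew-symmetric `n × n` matrices. -/
def soAll (n : ℕ) : Submodule ℝ (Matrix (Fin n) (Fin n) ℝ) where
  carrier := {X | Xᵀ = -X}
  add_mem' := fun {a b} ha hb => by
    have ha' : aᵀ = -a := ha
    have hb' : bᵀ = -b := hb
    show (a + b)ᵀ = -(a + b)
    rw [transpose_add, ha', hb', neg_add]
  zero_mem' := by simp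
  smul_mem' := fun c a ha => by
    have ha' : aᵀ = -a := ha
    show (c • a)ᵀ = -(c • a)
    rw [transpose_smul, ha', smul_neg]

/-- The copy of `so(n−1)` inside the `n × n` matrices: skew-symmetric matrices whose
row and column indexed by `ℓ` (the last index) vanish. -/
def soSubAt (n : ℕ) (ℓ : Fin n) : Submodule ℝ (Matrix (Fin n) (Fin n) ℝ) where
  carrier := {X | Xᵀ = -X ∧ (∀ j, X ℓ j = 0) ∧ (∀ i, X i ℓ = 0)}
  add_mem' := fun {a b} ha hb =>
    ⟨by rw [transpose_add, ha.1, hb.1, neg_add],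
     fun j => by simp [Matrix.add_apply, ha.2.1 j, hb.2.1 j],
     fun i => by simp [Matrix.add_apply, ha.2.2 i, hb.2.2 i]⟩
  zero_mem' := ⟨by simp, fun j => rfl, fun i => rfl⟩
  smul_mem' := fun c a ha =>
    ⟨by rw [transpose_smul, ha.1, smul_neg],
     fun j => by simp [Matrix.smul_apply, ha.2.1 j],
     fun i => by simp [Matrix.smul_apply, ha.2.2 i]⟩

/-- The distribution `𝔇 = span{E_i ∧ E_ℓ : i ≠ ℓ}` (with `ℓ` the last index). -/
def DDAt (n : ℕ) (ℓ : Fin n) : Submodule ℝ (Matrix (Fin n) (Fin n) ℝ) :=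
  Submodule.span ℝ
    {X | ∃ i : Fin n, i ≠ ℓ ∧ X = wedge (Pi.single i 1) (Pi.single ℓ 1)}

/-- Conjugation `X ↦ g⁻¹ X g` as a linear map on matrices. -/
noncomputable def conjMap (n : ℕ) (g : Matrix (Fin n) (Fin n) ℝ) :
    Matrix (Fin n) (Fin n) ℝ →ₗ[ℝ] Matrix (Fin n) (Fin n) ℝ where
  toFun X := g⁻¹ * X * g
  map_add' X Y := by rw [mul_add, add_mul]
  map_smul' c X := by simp [Matrix.mul_smul, Matrix.smul_mul]


namespace SuslovAux
variable {n : ℕ}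

lemma wedge_apply (u v : Fin n → ℝ) (i j : Fin n) :
    wedge u v i j = u i * v j - v i * u j := rfl

lemma wedge_transpose (u v : Fin n → ℝ) : (wedge u v)ᵀ = -(wedge u v) := by
  ext i j; simp [wedge_apply, transpose_apply]; ring

lemma mul_vecMulVec (A : Matrix (Fin n) (Fin n) ℝ) (u v : Fin n → ℝ) :
    A * vecMulVec u v = vecMulVec (A *ᵥ u) v := by
  ext i j
  simp [Matrix.mul_apply, vecMulVec_apply, Matrix.mulVec, dotProduct,
    Finset.sum_mul, mul_assoc]

lemma vecMulVec_mul (A : Matrix (Fin n) (Fin n) ℝ) (u v : Fin n → ℝ) :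
    vecMulVec u v * Aᵀ = vecMulVec u (A *ᵥ v) := by
  ext i j
  simp [Matrix.mul_apply, vecMulVec_apply, Matrix.mulVec, dotProduct,
    Finset.mul_sum, transpose_apply]
  congr 1; ext k; ring

lemma mul_wedge (A : Matrix (Fin n) (Fin n) ℝ) (u v : Fin n → ℝ) :
    A * wedge u v * Aᵀ = wedge (A *ᵥ u) (A *ᵥ v) := by
  unfold wedge
  rw [mul_sub, sub_mul, mul_vecMulVec, mul_vecMulVec, vecMulVec_mul, vecMulVec_mul]

lemma wedge_smul_left (c : ℝ) (u v : Fin n → ℝ) : wedge (c • u) v = c • wedge u v := by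
  ext i j; simp [wedge_apply]; ring

lemma wedge_add_left (u w v : Fin n → ℝ) : wedge (u + w) v = wedge u v + wedge w v := by
  ext i j; simp [wedge_apply]; ring

lemma wedge_same (v : Fin n → ℝ) : wedge v v = 0 := by
  ext i j; simp [wedge_apply]

lemma wedge_sum_left (a v : Fin n → ℝ) :
    wedge a v = ∑ i, a i • wedge (Pi.single i 1) v := by
  ext i j
  rw [Matrix.sum_apply]
  simp [wedge_apply, Pi.single_apply, ite_mul, mul_ite, mul_sub, Finset.sum_sub_distrib,
    mul_comm]

lemma mem_DDAt (ℓ : Fin n) (a : Fin n → ℝ) :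
    wedge a (Pi.single ℓ 1) ∈ DDAt n ℓ := by
  rw [wedge_sum_left]
  refine Submodule.sum_mem _ fun i _ => Submodule.smul_mem _ _ ?_
  by_cases h : i = ℓ
  · subst h; rw [wedge_same]; exact Submodule.zero_mem _
  · exact Submodule.subset_span ⟨i, h, rfl⟩

lemma DDAt_rep {ℓ : Fin n} {D : Matrix (Fin n) (Fin n) ℝ} (hD : D ∈ DDAt n ℓ) :
    ∃ a : Fin n → ℝ, D = wedge a (Pi.single ℓ 1) := by
  induction hD using Submodule.span_induction with
  | mem X hX => obtain ⟨i, _, rfl⟩ := hX; exact ⟨_, rfl⟩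
  | zero => exact ⟨0, by rw [show (0 : Fin n → ℝ) = (0 : ℝ) • 0 by simp, wedge_smul_left]; simp⟩
  | add _ _ _ _ h1 h2 =>
      obtain ⟨a, rfl⟩ := h1; obtain ⟨b, rfl⟩ := h2
      exact ⟨a + b, (wedge_add_left a b _).symm⟩
  | smul c _ _ h1 =>
      obtain ⟨a, rfl⟩ := h1
      exact ⟨c • a, (wedge_smul_left c a _).symm⟩

end SuslovAux

/-- Theorem 1 of the paper: for `n ≥ 3` and `g ∈ SO(n)`, the subspace sum
`𝔇 + g⁻¹·so(n−1)·g` equals `so(n)` if and only if `g_{nn} ≠ 0`. -/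
theorem suslov_connection_iff (n : ℕ) (hn : 3 ≤ n)
    (g : Matrix (Fin n) (Fin n) ℝ) (hg : gᵀ * g = 1) (hgdet : g.det = 1) :
    DDAt n ⟨n - 1, by omega⟩ ⊔
        (soSubAt n ⟨n - 1, by omega⟩).map (conjMap n g) = soAll n ↔
      g ⟨n - 1, by omega⟩ ⟨n - 1, by omega⟩ ≠ 0 := by
  classical
  open SuslovAux in
  set ℓ : Fin n := ⟨n - 1, by omega⟩ with hℓdef
  set e : Fin n → ℝ := Pi.single ℓ 1 with he
  have hgg : g * gᵀ = 1 := mul_eq_one_comm.mp hg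
  have hinv : g⁻¹ = gᵀ := inv_eq_left_inv hg
  constructor
  · -- sum = so(n) → g ℓ ℓ ≠ 0
    intro hsum hzero
    -- row ℓ of g is a unit vector
    obtain ⟨i₀, hi₀⟩ : ∃ k, g ℓ k ≠ 0 := by
      by_contra h
      push_neg at h
      have h1 : (g * gᵀ) ℓ ℓ = (1 : Matrix (Fin n) (Fin n) ℝ) ℓ ℓ := by rw [hgg]
      simp [Matrix.mul_apply, h, Matrix.one_apply] at h1
    have hi₀ℓ : i₀ ≠ ℓ := fun h => hi₀ (h ▸ hzero)
    obtain ⟨i₁, h1ℓ, h1i₀⟩ : ∃ i₁ : Fin n, i₁ ≠ ℓ ∧ i₁ ≠ i₀ := by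
      by_contra h
      push_neg at h
      have hsub : (Finset.univ : Finset (Fin n)) ⊆ {ℓ, i₀} := by
        intro x _
        rcases eq_or_ne x ℓ with rfl | hx
        · simp
        · simp [h x hx]
      have := Finset.card_le_card hsub
      have h2 : ({ℓ, i₀} : Finset (Fin n)).card ≤ 2 :=
        (Finset.card_insert_le _ _).trans (by simp)
      simp [Finset.card_univ] at this
      omega
    set u : Fin n → ℝ := fun i => g ℓ i with hu
    set w : Fin n → ℝ := Pi.single i₁ 1 with hw
    have hgu : g *ᵥ u = e := by
      have : u = gᵀ *ᵥ e := by
        ext i; simp [he, hu, Matrix.mulVec_single, transpose_apply]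
      rw [this, mulVec_mulVec, hgg, one_mulVec]
    set M := wedge w u with hM
    have hMskew : M ∈ soAll n := wedge_transpose w u
    have hMmem : M ∈ DDAt n ℓ ⊔ (soSubAt n ℓ).map (conjMap n g) := by
      rw [hsum]; exact hMskew
    rw [Submodule.mem_sup] at hMmem
    obtain ⟨D, hD, Y', hY', hMeq⟩ := hMmem
    obtain ⟨Y, hY, rfl⟩ := hY'
    obtain ⟨a, rfl⟩ := DDAt_rep hD
    have hconj : conjMap n g Y = gᵀ * Y * g := by
      show g⁻¹ * Y * g = gᵀ * Y * g
      rw [hinv]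
    rw [hconj] at hMeq
    -- conjugate the equation by g
    have hE : wedge (g *ᵥ w) e = wedge (g *ᵥ a) (g *ᵥ e) + Y := by
      have := congrArg (fun Z => g * Z * gᵀ) hMeq.symm
      simp only [mul_add, add_mul] at this
      rw [mul_wedge, mul_wedge, hgu] at this
      have hYc : g * (gᵀ * Y * g) * gᵀ = Y := by
        rw [show g * (gᵀ * Y * g) * gᵀ = (g * gᵀ) * Y * (g * gᵀ) by simp only [Matrix.mul_assoc], hgg]
        simp
      rw [hYc] at this
      exact this
    set v : Fin n → ℝ := g *ᵥ w with hv
    have hcℓ : (g *ᵥ e) ℓ = 0 := by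
      simp [he, Matrix.mulVec_single]
      exact hzero
    have hvi : ∀ i, v i = v ℓ * e i - (g *ᵥ a) ℓ * (g *ᵥ e) i := by
      intro i
      have h1 := congrFun (congrFun hE i) ℓ
      have heℓ : e ℓ = 1 := by simp [he]
      rw [Matrix.add_apply, wedge_apply, wedge_apply, heℓ, hcℓ, hY.2.2 i] at h1
      ring_nf at h1 ⊢
      linarith [h1]
    have hveq : v = v ℓ • e - (g *ᵥ a) ℓ • (g *ᵥ e) := by
      ext i; rw [hvi i]; simp
    have hwv : w = gᵀ *ᵥ v := by
      rw [hv, mulVec_mulVec, hg, one_mulVec]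
    rw [hveq, mulVec_sub, mulVec_smul, mulVec_smul, mulVec_mulVec, hg, one_mulVec] at hwv
    have hge : gᵀ *ᵥ e = u := by
      ext i; simp [he, hu, Matrix.mulVec_single, transpose_apply]
    rw [hge] at hwv
    have hw1 : w i₁ = 1 := by simp [hw]
    have hw0 : w i₀ = 0 := by simp [hw, Pi.single_apply, h1i₀.symm]
    have he1 : e i₁ = 0 := by simp [he, Pi.single_apply, h1ℓ]
    have he0 : e i₀ = 0 := by simp [he, Pi.single_apply, hi₀ℓ]
    have hc1 := congrFun hwv i₁
    have hc0 := congrFun hwv i₀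
    simp only [Pi.sub_apply, Pi.smul_apply, smul_eq_mul, he1, he0, hw1, hw0] at hc1 hc0
    -- hc0 : 0 = v ℓ * u i₀ - (g *ᵥ a) ℓ * 0 ; u i₀ = g ℓ i₀ ≠ 0
    have hvℓ : v ℓ = 0 := by
      have : v ℓ * u i₀ = 0 := by rw [mul_comm] at hc0 ⊢; linarith [hc0]
      rcases mul_eq_zero.mp this with h | h
      · exact h
      · exact absurd h hi₀
    rw [hvℓ] at hc1
    simp at hc1
  · -- g ℓ ℓ ≠ 0 → sum = so(n)
    intro hκ
    apply le_antisymm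
    · apply sup_le
      · rw [DDAt, Submodule.span_le]
        rintro X ⟨i, hi, rfl⟩
        exact wedge_transpose _ _
      · rintro X ⟨Y, hY, rfl⟩
        show (g⁻¹ * Y * g)ᵀ = -(g⁻¹ * Y * g)
        rw [hinv]
        rw [transpose_mul, transpose_mul, transpose_transpose, hY.1]
        simp [Matrix.mul_assoc, Matrix.neg_mul, Matrix.mul_neg]
    · intro X hX
      have hXskew : Xᵀ = -X := hX
      set κ : ℝ := g ℓ ℓ with hκdef
      set Z : Matrix (Fin n) (Fin n) ℝ := g * X * gᵀ with hZ
      have hZskew : Zᵀ = -Z := by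
        rw [hZ, transpose_mul, transpose_mul, transpose_transpose, hXskew]
        simp [Matrix.mul_assoc, Matrix.neg_mul, Matrix.mul_neg]
      have hZℓℓ : Z ℓ ℓ = 0 := by
        have := congrFun (congrFun hZskew ℓ) ℓ
        simp only [transpose_apply, Matrix.neg_apply] at this
        linarith
      set z : Fin n → ℝ := fun i => Z i ℓ with hz
      set b : Fin n → ℝ := κ⁻¹ • z with hb
      set c : Fin n → ℝ := g *ᵥ e with hc
      set a : Fin n → ℝ := gᵀ *ᵥ b with ha
      set Y : Matrix (Fin n) (Fin n) ℝ := Z - wedge b c with hY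
      have hcℓ : c ℓ = κ := by simp [hc, he, Matrix.mulVec_single, hκdef]
      have hbℓ : b ℓ = 0 := by simp [hb, hz, hZℓℓ]
      have hYskew : Yᵀ = -Y := by
        rw [hY, transpose_sub, hZskew, wedge_transpose]
        ext i j; simp; ring
      have hYcol : ∀ i, Y i ℓ = 0 := by
        intro i
        rw [hY, Matrix.sub_apply, wedge_apply, hcℓ, hbℓ]
        simp only [hb, Pi.smul_apply, smul_eq_mul, hz, mul_zero, sub_zero]
        field_simp
        ring
      have hYrow : ∀ j, Y ℓ j = 0 := by
        intro j
        have := congrFun (congrFun hYskew j) ℓ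
        simp only [transpose_apply, Matrix.neg_apply] at this
        rw [hYcol j] at this
        linarith
      have hYmem : Y ∈ soSubAt n ℓ := ⟨hYskew, hYrow, hYcol⟩
      have hDmem : wedge a e ∈ DDAt n ℓ := mem_DDAt ℓ a
      have hgc : gᵀ *ᵥ c = e := by
        rw [hc, mulVec_mulVec, hg, one_mulVec]
      have hXeq : X = wedge a e + conjMap n g Y := by
        show X = wedge a e + g⁻¹ * Y * g
        rw [hinv, hY, mul_sub, sub_mul]
        have h1 : gᵀ * Z * g = X := by
          rw [hZ, show gᵀ * (g * X * gᵀ) * g = (gᵀ * g) * X * (gᵀ * g) by simp only [Matrix.mul_assoc], hg]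
          simp
        have h2 : gᵀ * wedge b c * g = wedge a e := by
          have := mul_wedge gᵀ b c
          rw [transpose_transpose] at this
          rw [this, hgc, ha]
        rw [h1, h2]
        abel
      rw [hXeq]
      exact Submodule.add_mem _ (Submodule.mem_sup_left hDmem)
        (Submodule.mem_sup_right ⟨Y, hYmem, rfl⟩)
end

section
/- Let n ≥ 2, let B = {q ∈ ℝ^{n−1} : (q,q) < 1}, J a symmetric positive definite (n−1)×(n−1) real matrix, A = J⁻¹, V : B → ℝ continuously differentiable, and H(q,P) = ½(1 − (q,q))(AP,P) + V(q). Then H is a first integral of the reduced Suslov system q̇ = (1 − (q,q))·AP, Ṗ = (AP,P)·q − ∇V(q) + (AP,q)·P − (P,AP)·q: for every differentiable solution (q(t), P(t)) with q(t) ∈ B, the function t ↦ H(q(t),P(t)) is constant. -/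
open Matrix Set

/-- The continuous linear functional `v ↦ w ⬝ᵥ v` on `ℝᵐ`. -/
noncomputable def dotCLM {m : ℕ} (w : Fin m → ℝ) : (Fin m → ℝ) →L[ℝ] ℝ :=
  LinearMap.toContinuousLinearMap
    { toFun := fun v => w ⬝ᵥ v
      map_add' := fun a b => dotProduct_add w a b
      map_smul' := fun c a => by simp [dotProduct_smul, smul_eq_mul] }

lemma hasDerivAt_dot {m : ℕ} {f g : ℝ → Fin m → ℝ} {f' g' : Fin m → ℝ} {t : ℝ}
    (hf : HasDerivAt f f' t) (hg : HasDerivAt g g' t) :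
    HasDerivAt (fun t => f t ⬝ᵥ g t) (f' ⬝ᵥ g t + f t ⬝ᵥ g') t := by
  have h : HasDerivAt (fun t => ∑ i, f t i * g t i)
      (∑ i, (f' i * g t i + f t i * g' i)) t :=
    HasDerivAt.fun_sum fun i _ => ((hasDerivAt_pi.1 hf i).mul (hasDerivAt_pi.1 hg i))
  simpa [dotProduct, Finset.sum_add_distrib] using h

lemma hasDerivAt_mulVec {m : ℕ} (A : Matrix (Fin m) (Fin m) ℝ) {f : ℝ → Fin m → ℝ}
    {f' : Fin m → ℝ} {t : ℝ} (hf : HasDerivAt f f' t) :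
    HasDerivAt (fun t => A.mulVec (f t)) (A.mulVec f') t := by
  have h := hasDerivAt_pi.1 hf
  refine hasDerivAt_pi.2 fun i => ?_
  have : HasDerivAt (fun t => ∑ j, A i j * f t j) (∑ j, A i j * f' j) t :=
    HasDerivAt.fun_sum fun j _ => (h j).const_mul (A i j)
  simpa [Matrix.mulVec, dotProduct] using this

/-- The Hamiltonian `H(q,P) = ½(1−(q,q))(AP,P) + V(q)` is a first integral of the
Chaplygin-reduced Suslov system (equation (14) of the paper)
`q̇ = (1−(q,q))·AP`, `Ṗ = (AP,P)q − ∇V(q) + (AP,q)P − (P,AP)q` in the open unit ball. -/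
theorem suslov_energy_integral (n : ℕ) (hn : 2 ≤ n)
    (J A : Matrix (Fin (n - 1)) (Fin (n - 1)) ℝ) (hJ : J.IsSymm) (hJpd : J.PosDef)
    (hA : A = J⁻¹)
    (V : (Fin (n - 1) → ℝ) → ℝ) (gradV : (Fin (n - 1) → ℝ) → (Fin (n - 1) → ℝ))
    (hV : ∀ x, x ⬝ᵥ x < 1 → HasFDerivAt V (dotCLM (gradV x)) x)
    (hVc : ContinuousOn gradV {x | x ⬝ᵥ x < 1})
    (a b : ℝ) (q P : ℝ → Fin (n - 1) → ℝ)
    (hball : ∀ t ∈ Ioo a b, q t ⬝ᵥ q t < 1)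
    (hq : ∀ t ∈ Ioo a b, HasDerivAt q ((1 - q t ⬝ᵥ q t) • A.mulVec (P t)) t)
    (hP : ∀ t ∈ Ioo a b, HasDerivAt P
      ((A.mulVec (P t) ⬝ᵥ P t) • q t - gradV (q t)
        + (A.mulVec (P t) ⬝ᵥ q t) • P t - (P t ⬝ᵥ A.mulVec (P t)) • q t) t) :
    ∀ t₁ ∈ Ioo a b, ∀ t₂ ∈ Ioo a b,
      (1 / 2) * (1 - q t₁ ⬝ᵥ q t₁) * (A.mulVec (P t₁) ⬝ᵥ P t₁) + V (q t₁) =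
        (1 / 2) * (1 - q t₂ ⬝ᵥ q t₂) * (A.mulVec (P t₂) ⬝ᵥ P t₂) + V (q t₂) := by
  -- A is symmetric
  have hAs : Aᵀ = A := by
    rw [hA, Matrix.transpose_nonsing_inv, hJ.eq]
  have hswap : ∀ x y : Fin (n-1) → ℝ, A.mulVec x ⬝ᵥ y = x ⬝ᵥ A.mulVec y := by
    intro x y
    rw [dotProduct_comm (A.mulVec x) y, Matrix.dotProduct_mulVec, ← hAs,
      Matrix.vecMul_transpose, dotProduct_comm, hAs]
  set E : ℝ → ℝ := fun t =>
    (1 / 2) * (1 - q t ⬝ᵥ q t) * (A.mulVec (P t) ⬝ᵥ P t) + V (q t) with hE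
  have key : ∀ t ∈ Ioo a b, HasDerivAt E 0 t := by
    intro t ht
    set u := A.mulVec (P t) with hu
    set q' := (1 - q t ⬝ᵥ q t) • u with hq'
    set P' := ((u ⬝ᵥ P t) • q t - gradV (q t) + (u ⬝ᵥ q t) • P t
      - (P t ⬝ᵥ u) • q t) with hP'
    have hqd : HasDerivAt q q' t := hq t ht
    have hPd : HasDerivAt P P' t := hP t ht
    have hs' : HasDerivAt (fun t => q t ⬝ᵥ q t) (q' ⬝ᵥ q t + q t ⬝ᵥ q') t :=
      hasDerivAt_dot hqd hqd
    have hk' : HasDerivAt (fun t => A.mulVec (P t) ⬝ᵥ P t)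
        (A.mulVec P' ⬝ᵥ P t + A.mulVec (P t) ⬝ᵥ P') t :=
      hasDerivAt_dot (hasDerivAt_mulVec A hPd) hPd
    have hVd : HasDerivAt (fun t => V (q t)) (gradV (q t) ⬝ᵥ q') t := by
      have := (hV (q t) (hball t ht)).comp_hasDerivAt t hqd
      simp [dotCLM] at this; exact this
    have h1 : HasDerivAt (fun t => (1 / 2 : ℝ) * (1 - q t ⬝ᵥ q t))
        ((1 / 2) * (0 - (q' ⬝ᵥ q t + q t ⬝ᵥ q'))) t :=
      ((hasDerivAt_const t (1:ℝ)).sub hs').const_mul (1/2)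
    have hD := (h1.mul hk').add hVd
    -- show the derivative is zero
    convert hD using 1
    case e'_4 => rfl
    case e'_5 => rfl
    case e'_8 => rfl
    have e1 : A.mulVec P' ⬝ᵥ P t = P' ⬝ᵥ u := by
      rw [hswap, ← hu, dotProduct_comm]
    have e2 : P t ⬝ᵥ u = u ⬝ᵥ P t := dotProduct_comm _ _
    rw [e1]
    simp only [hq', hP', smul_dotProduct, dotProduct_smul,
      sub_dotProduct, add_dotProduct, dotProduct_sub,
      dotProduct_add, smul_eq_mul, e2, ← hu]
    rw [dotProduct_comm (gradV (q t)) u, dotProduct_comm (q t) u]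
    ring
  -- constancy
  intro t₁ ht₁ t₂ ht₂
  have hconv : Convex ℝ (Ioo a b) := convex_Ioo a b
  have hdiff : DifferentiableOn ℝ E (Ioo a b) := fun t ht =>
    ((key t ht).differentiableAt.differentiableWithinAt)
  have hzero : ∀ t ∈ Ioo a b, fderivWithin ℝ E (Ioo a b) t = 0 := by
    intro t ht
    rw [fderivWithin_of_isOpen isOpen_Ioo ht, (key t ht).hasFDerivAt.fderiv]
    ext x
    simp
  exact hconv.is_const_of_fderivWithin_eq_zero hdiff hzero ht₁ ht₂
end

section
/- Let n ≥ 2 and let I₁,…,I_n, B₁,…,B_n, C₁,…,C_{n−1} be real constants with I_i + I_n > 0 for i = 1,…,n−1. On ℝ^{n−1} × ℝ^{n−1} with canonical coordinates (q₁,…,q_{n−1}, p₁,…,p_{n−1}) define H*(q,p) = ½ Σ_{i=1}^{n−1} p_i²/(I_i+I_n) + Σ_{i=1}^{n−1} C_i q_i + ½ Σ_{i=1}^{n−1} (B_i − B_n) q_i², and f_i(q,p) = p_i² + 2C_i(I_i+I_n)q_i + (I_i+I_n)(B_i−B_n)q_i² for i = 1,…,n−1. Then, with respect to the canonical Poisson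 bracket {f,g} = Σ_k (∂f/∂q_k · ∂g/∂p_k − ∂f/∂p_k · ∂g/∂q_k), one has {f_i, f_j} = 0 for all i, j and {f_i, H*} = 0 for all i; consequently each f_i is constant along every solution of Hamilton's equations q̇_k = ∂H*/∂p_k, ṗ_k = −∂H*/∂q_k. -/
open Matrix

/-- The canonical Poisson bracket
`{f,g} = Σ_k (∂f/∂q_k · ∂g/∂p_k − ∂f/∂p_k · ∂g/∂q_k)` on `ℝᵐ{q} × ℝᵐ{p}`. -/
noncomputable def pbracket {m : ℕ} (f g : ((Fin m → ℝ) × (Fin m → ℝ)) → ℝ)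
    (x : (Fin m → ℝ) × (Fin m → ℝ)) : ℝ :=
  ∑ k : Fin m,
    (fderiv ℝ f x (Pi.single k 1, 0) * fderiv ℝ g x (0, Pi.single k 1) -
      fderiv ℝ f x (0, Pi.single k 1) * fderiv ℝ g x (Pi.single k 1, 0))

/-- `I_i + I_n` for `i = 1, …, n−1`. -/
def Kconst (n : ℕ) (hn : 2 ≤ n) (Ic : Fin n → ℝ) (i : Fin (n - 1)) : ℝ :=
  Ic (Fin.castLE (Nat.sub_le n 1) i) + Ic ⟨n - 1, by omega⟩

/-- `B_i − B_n` for `i = 1, …, n−1`. -/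
def Bdiff (n : ℕ) (hn : 2 ≤ n) (B : Fin n → ℝ) (i : Fin (n - 1)) : ℝ :=
  B (Fin.castLE (Nat.sub_le n 1) i) - B ⟨n - 1, by omega⟩

/-- The Hamiltonian (equation (20) of the paper)
`H* = ½ Σ p_i²/(I_i+I_n) + Σ C_i q_i + ½ Σ (B_i−B_n) q_i²`. -/
noncomputable def Hstar (n : ℕ) (hn : 2 ≤ n) (Ic B : Fin n → ℝ) (C : Fin (n - 1) → ℝ)
    (x : (Fin (n - 1) → ℝ) × (Fin (n - 1) → ℝ)) : ℝ :=
  (1 / 2) * ∑ i, x.2 i ^ 2 / Kconst n hn Ic i + ∑ i, C i * x.1 i +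
    (1 / 2) * ∑ i, Bdiff n hn B i * x.1 i ^ 2

/-- The integrals `f_i = p_i² + 2C_i(I_i+I_n)q_i + (I_i+I_n)(B_i−B_n)q_i²`. -/
def fint (n : ℕ) (hn : 2 ≤ n) (Ic B : Fin n → ℝ) (C : Fin (n - 1) → ℝ) (i : Fin (n - 1))
    (x : (Fin (n - 1) → ℝ) × (Fin (n - 1) → ℝ)) : ℝ :=
  x.2 i ^ 2 + 2 * C i * Kconst n hn Ic i * x.1 i +
    Kconst n hn Ic i * Bdiff n hn B i * x.1 i ^ 2

/-! ### Auxiliary lemmas -/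

/-- The coordinate projection `x ↦ x.1 i` as a continuous linear map. -/
noncomputable def Lq (m : ℕ) (i : Fin m) : ((Fin m → ℝ) × (Fin m → ℝ)) →L[ℝ] ℝ :=
  (ContinuousLinearMap.proj i).comp (ContinuousLinearMap.fst ℝ _ _)

/-- The coordinate projection `x ↦ x.2 i` as a continuous linear map. -/
noncomputable def Lp (m : ℕ) (i : Fin m) : ((Fin m → ℝ) × (Fin m → ℝ)) →L[ℝ] ℝ :=
  (ContinuousLinearMap.proj i).comp (ContinuousLinearMap.snd ℝ _ _)

@[simp] lemma Lq_apply (m : ℕ) (i : Fin m) (v : (Fin m → ℝ) × (Fin m → ℝ)) :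
    Lq m i v = v.1 i := rfl

@[simp] lemma Lp_apply (m : ℕ) (i : Fin m) (v : (Fin m → ℝ) × (Fin m → ℝ)) :
    Lp m i v = v.2 i := rfl

lemma key2 (m : ℕ) (c a b : ℝ) (i : Fin m) (x : (Fin m → ℝ) × (Fin m → ℝ)) :
    HasFDerivAt (fun y : (Fin m → ℝ) × (Fin m → ℝ) => c * y.2 i ^ 2 + a * y.1 i + b * y.1 i ^ 2)
      ((2 * c * x.2 i) • Lp m i + (a + 2 * b * x.1 i) • Lq m i) x := by
  have hq : HasFDerivAt (fun y : (Fin m → ℝ) × (Fin m → ℝ) => y.1 i) (Lq m i) x :=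
    (Lq m i).hasFDerivAt
  have hp : HasFDerivAt (fun y : (Fin m → ℝ) × (Fin m → ℝ) => y.2 i) (Lp m i) x :=
    (Lp m i).hasFDerivAt
  have H := (((hp.mul hp).const_mul c).add (hq.const_mul a)).add ((hq.mul hq).const_mul b)
  have heq : (fun y : (Fin m → ℝ) × (Fin m → ℝ) =>
      c * y.2 i ^ 2 + a * y.1 i + b * y.1 i ^ 2) =
      fun y => c * (y.2 i * y.2 i) + a * y.1 i + b * (y.1 i * y.1 i) := by
    funext y; ring
  rw [heq]
  refine H.congr_fderiv ?_
  ext v <;>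
    simp [ContinuousLinearMap.comp_apply, ContinuousLinearMap.add_apply,
      ContinuousLinearMap.smul_apply, smul_eq_mul] <;> ring

lemma hasFDerivAt_fint (n : ℕ) (hn : 2 ≤ n) (Ic B : Fin n → ℝ) (C : Fin (n - 1) → ℝ)
    (i : Fin (n - 1)) (x : (Fin (n - 1) → ℝ) × (Fin (n - 1) → ℝ)) :
    HasFDerivAt (fint n hn Ic B C i)
      ((2 * x.2 i) • Lp (n - 1) i +
        (2 * C i * Kconst n hn Ic i +
          2 * (Kconst n hn Ic i * Bdiff n hn B i) * x.1 i) • Lq (n - 1) i) x := by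
  have heq : fint n hn Ic B C i = fun y : (Fin (n - 1) → ℝ) × (Fin (n - 1) → ℝ) =>
      1 * y.2 i ^ 2 + (2 * C i * Kconst n hn Ic i) * y.1 i +
        (Kconst n hn Ic i * Bdiff n hn B i) * y.1 i ^ 2 := by
    funext y; simp [fint]
  rw [heq]
  have := key2 (n - 1) 1 (2 * C i * Kconst n hn Ic i) (Kconst n hn Ic i * Bdiff n hn B i) i x
  convert this using 2
  ring

lemma hasFDerivAt_Hstar (n : ℕ) (hn : 2 ≤ n) (Ic B : Fin n → ℝ) (C : Fin (n - 1) → ℝ)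
    (x : (Fin (n - 1) → ℝ) × (Fin (n - 1) → ℝ)) :
    HasFDerivAt (Hstar n hn Ic B C)
      (∑ i : Fin (n - 1),
        ((x.2 i / Kconst n hn Ic i) • Lp (n - 1) i +
          (C i + Bdiff n hn B i * x.1 i) • Lq (n - 1) i)) x := by
  have heq : Hstar n hn Ic B C = fun y : (Fin (n - 1) → ℝ) × (Fin (n - 1) → ℝ) =>
      ∑ i : Fin (n - 1), ((1 / (2 * Kconst n hn Ic i)) * y.2 i ^ 2 + C i * y.1 i +
        (Bdiff n hn B i / 2) * y.1 i ^ 2) := by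
    funext y
    simp only [Hstar, Finset.mul_sum]
    rw [← Finset.sum_add_distrib, ← Finset.sum_add_distrib]
    refine Finset.sum_congr rfl fun i _ => ?_
    ring
  rw [heq]
  have H := HasFDerivAt.fun_sum (fun i (_ : i ∈ Finset.univ) =>
    key2 (n - 1) (1 / (2 * Kconst n hn Ic i)) (C i) (Bdiff n hn B i / 2) i x)
  refine H.congr_fderiv ?_
  refine Finset.sum_congr rfl fun i _ => ?_
  congr 1 <;> congr 1 <;> field_simp <;> ring

lemma fderiv_fint_q (n : ℕ) (hn : 2 ≤ n) (Ic B : Fin n → ℝ) (C : Fin (n - 1) → ℝ)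
    (i k : Fin (n - 1)) (x : (Fin (n - 1) → ℝ) × (Fin (n - 1) → ℝ)) :
    fderiv ℝ (fint n hn Ic B C i) x (Pi.single k 1, 0) =
      (2 * C i * Kconst n hn Ic i + 2 * (Kconst n hn Ic i * Bdiff n hn B i) * x.1 i) *
        (if i = k then 1 else 0) := by
  rw [(hasFDerivAt_fint n hn Ic B C i x).fderiv]
  simp [Pi.single_apply]

lemma fderiv_fint_p (n : ℕ) (hn : 2 ≤ n) (Ic B : Fin n → ℝ) (C : Fin (n - 1) → ℝ)
    (i k : Fin (n - 1)) (x : (Fin (n - 1) → ℝ) × (Fin (n - 1) → ℝ)) :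
    fderiv ℝ (fint n hn Ic B C i) x (0, Pi.single k 1) =
      2 * x.2 i * (if i = k then 1 else 0) := by
  rw [(hasFDerivAt_fint n hn Ic B C i x).fderiv]
  simp [Pi.single_apply]

lemma fderiv_Hstar_q (n : ℕ) (hn : 2 ≤ n) (Ic B : Fin n → ℝ) (C : Fin (n - 1) → ℝ)
    (k : Fin (n - 1)) (x : (Fin (n - 1) → ℝ) × (Fin (n - 1) → ℝ)) :
    fderiv ℝ (Hstar n hn Ic B C) x (Pi.single k 1, 0) =
      C k + Bdiff n hn B k * x.1 k := by
  rw [(hasFDerivAt_Hstar n hn Ic B C x).fderiv]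
  simp [ContinuousLinearMap.sum_apply, Pi.single_apply]

lemma fderiv_Hstar_p (n : ℕ) (hn : 2 ≤ n) (Ic B : Fin n → ℝ) (C : Fin (n - 1) → ℝ)
    (k : Fin (n - 1)) (x : (Fin (n - 1) → ℝ) × (Fin (n - 1) → ℝ)) :
    fderiv ℝ (Hstar n hn Ic B C) x (0, Pi.single k 1) =
      x.2 k / Kconst n hn Ic k := by
  rw [(hasFDerivAt_Hstar n hn Ic B C x).fderiv]
  simp [ContinuousLinearMap.sum_apply, Pi.single_apply]

/-- The functions `f_i` Poisson commute between themselves and with the Hamiltonian `H*`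
of the time-rescaled reduced Suslov problem with quadratic potential; consequently each
`f_i` is constant along every solution of Hamilton's equations for `H*`. -/
theorem suslov_quadratic_integrals (n : ℕ) (hn : 2 ≤ n) (Ic B : Fin n → ℝ)
    (C : Fin (n - 1) → ℝ)
    (hI : ∀ i : Fin (n - 1), 0 < Kconst n hn Ic i) :
    (∀ i j : Fin (n - 1), ∀ x,
      pbracket (fint n hn Ic B C i) (fint n hn Ic B C j) x = 0) ∧
    (∀ i : Fin (n - 1), ∀ x,
      pbracket (fint n hn Ic B C i) (Hstar n hn Ic B C) x = 0) ∧
    (∀ q p : ℝ → Fin (n - 1) → ℝ,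
      (∀ t : ℝ, HasDerivAt q
        (fun k => fderiv ℝ (Hstar n hn Ic B C) (q t, p t) (0, Pi.single k 1)) t) →
      (∀ t : ℝ, HasDerivAt p
        (fun k => -fderiv ℝ (Hstar n hn Ic B C) (q t, p t) (Pi.single k 1, 0)) t) →
      ∀ i : Fin (n - 1), ∀ t₁ t₂ : ℝ,
        fint n hn Ic B C i (q t₁, p t₁) = fint n hn Ic B C i (q t₂, p t₂)) := by
  refine ⟨?_, ?_, ?_⟩
  · intro i j x
    unfold pbracket
    apply Finset.sum_eq_zero
    intro k _
    rw [fderiv_fint_q, fderiv_fint_p, fderiv_fint_q, fderiv_fint_p]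
    by_cases h1 : i = k <;> by_cases h2 : j = k <;> simp [h1, h2] <;> ring
  · intro i x
    unfold pbracket
    apply Finset.sum_eq_zero
    intro k _
    rw [fderiv_fint_q, fderiv_fint_p, fderiv_Hstar_q, fderiv_Hstar_p]
    by_cases h1 : i = k
    · subst h1
      have hK := (hI i).ne'
      simp only [if_pos rfl, mul_one]
      field_simp
      ring
    · simp [h1]
  · intro q p hq hp i t₁ t₂
    have key : ∀ t, HasDerivAt (fun t => fint n hn Ic B C i (q t, p t)) 0 t := by
      intro t
      have hx := (hq t).prodMk (hp t)
      have hf := hasFDerivAt_fint n hn Ic B C i (q t, p t)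
      have hcomp := hf.comp_hasDerivAt t hx
      refine hcomp.congr_deriv ?_
      have hK := (hI i).ne'
      simp only [ContinuousLinearMap.add_apply, ContinuousLinearMap.smul_apply, smul_eq_mul,
        Lq_apply, Lp_apply, fderiv_Hstar_q, fderiv_Hstar_p]
      field_simp
      ring
    exact is_const_of_deriv_eq_zero (fun t => (key t).differentiableAt)
      (fun t => (key t).deriv) t₁ t₂
end
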